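/- Let I and J be proper two-sided ideals of compact operators on an infinite-dimensional Hilbert space H, and assume I is not contained in J. Then the J-dual space J:I = {a ∈ B(H) : ax ∈ J for all x ∈ I} consists of compact operators, i.e. J:I ⊆ K(H). -/

import Mathlib

open Filter Topology

noncomputable section

variable {H : Type*} [NormedAddCommGroup H] [InnerProductSpace ℂ H] [CompleteSpace H]

/-- The `n`-th singular value of a compact operator, realized as the `n`-th
approximation number: the distance from `x` to operators of rank at most `n`
(indexed from `0`, so `sv x 0 = ‖x‖` for `x` compact). -/
def sv (x : H →L[ℂ] H) (n : ℕ) : ℝ :=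
  sInf ((fun F : H →L[ℂ] H => ‖x - F‖) ''
    {F | Module.finrank ℂ (LinearMap.range F.toLinearMap) ≤ n})

/-- A (not necessarily closed) two-sided ideal of `B(H)`. -/
structure IsOpIdeal (I : Set (H →L[ℂ] H)) : Prop where
  zero_mem : (0 : H →L[ℂ] H) ∈ I
  add_mem : ∀ {x y : H →L[ℂ] H}, x ∈ I → y ∈ I → x + y ∈ I
  smul_mem : ∀ (α : ℂ) {x : H →L[ℂ] H}, x ∈ I → α • x ∈ I
  mul_mem_left : ∀ (a : H →L[ℂ] H) {x : H →L[ℂ] H}, x ∈ I → a * x ∈ I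
  mul_mem_right : ∀ (a : H →L[ℂ] H) {x : H →L[ℂ] H}, x ∈ I → x * a ∈ I

/-- A rank-one (orthogonal) projection. -/
def IsRankOneProjection (p : H →L[ℂ] H) : Prop :=
  p * p = p ∧ IsSelfAdjoint p ∧ Module.finrank ℂ (LinearMap.range p.toLinearMap) = 1

/-- A symmetric quasi-norm (with modulus of concavity `C`) on a two-sided ideal `I`. -/
structure IsSymmetricQuasiNorm (I : Set (H →L[ℂ] H)) (q : (H →L[ℂ] H) → ℝ) (C : ℝ) :
    Prop where
  one_le : 1 ≤ C
  nonneg : ∀ x ∈ I, 0 ≤ q x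
  eq_zero : ∀ x ∈ I, (q x = 0 ↔ x = 0)
  smul : ∀ (α : ℂ), ∀ x ∈ I, q (α • x) = ‖α‖ * q x
  add_le : ∀ x ∈ I, ∀ y ∈ I, q (x + y) ≤ C * (q x + q y)
  sym : ∀ (a b : H →L[ℂ] H), ∀ x ∈ I, q (a * x * b) ≤ ‖a‖ * q x * ‖b‖
  rank_one : ∀ p ∈ I, IsRankOneProjection p → q p = 1

/-- Completeness of a quasi-norm on a subset of `B(H)`. -/
def QCompleteOn (I : Set (H →L[ℂ] H)) (q : (H →L[ℂ] H) → ℝ) : Prop :=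
  ∀ x : ℕ → (H →L[ℂ] H), (∀ n, x n ∈ I) →
    (∀ ε : ℝ, 0 < ε → ∃ N, ∀ m n, N ≤ m → N ≤ n → q (x m - x n) < ε) →
    ∃ l ∈ I, Tendsto (fun n => q (x n - l)) atTop (𝓝 0)

/-- A symmetric quasi-Banach ideal of compact operators on `H`. -/
structure IsSymQBIdeal (I : Set (H →L[ℂ] H)) (q : (H →L[ℂ] H) → ℝ) (C : ℝ) : Prop where
  ideal : IsOpIdeal I
  compact : ∀ x ∈ I, IsCompactOperator ⇑x
  snorm : IsSymmetricQuasiNorm I q C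
  complete : QCompleteOn I q

end

variable {H : Type*} [NormedAddCommGroup H] [InnerProductSpace ℂ H] [CompleteSpace H]

/-- The `J`-dual space of `I`: all `a ∈ B(H)` with `ax ∈ J` for every `x ∈ I`. -/
def dualIdeal (J I : Set (H →L[ℂ] H)) : Set (H →L[ℂ] H) :=
  {a : H →L[ℂ] H | ∀ x ∈ I, a * x ∈ J}

section Aux

open Submodule

local notation "⟪" x ", " y "⟫" => @inner ℂ _ _ x y

lemma exists_eps (a : H →L[ℂ] H) (ha : ¬ IsCompactOperator (⇑a : H → H)) :
    ∃ ε > (0:ℝ), ∀ F : Submodule ℂ H, FiniteDimensional ℂ F →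
      ∃ v : H, v ∈ Fᗮ ∧ ‖v‖ = 1 ∧ ε ≤ ‖a v‖ := by
  by_contra h
  push_neg at h
  apply ha
  have hmem : a ∈ closure {f : H →L[ℂ] H | IsCompactOperator (⇑f : H → H)} := by
    rw [Metric.mem_closure_iff]
    intro ε hε
    obtain ⟨F, hFD, hsmall⟩ := h (ε/2) (by linarith)
    haveI := hFD
    haveI : CompleteSpace F := FiniteDimensional.complete ℂ F
    set P : H →L[ℂ] H := F.subtypeL.comp (orthogonalProjection F) with hP
    have hcomp : IsCompactOperator (⇑(a.comp P) : H → H) := by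
      have := (isCompactOperator_iff_image_ball_subset_compact
        ((a.comp P) : H →ₗ[ℂ] H) one_pos).mpr ?_
      · exact this
      refine ⟨(⇑a ∘ ((↑) : F → H)) '' Metric.closedBall 0 1,
        ((isCompact_closedBall (0:F) 1).image (by continuity)), ?_⟩
      rintro - ⟨z, hz, rfl⟩
      refine ⟨orthogonalProjection F z, ?_, rfl⟩
      rw [Metric.mem_ball, dist_zero_right] at hz
      rw [Metric.mem_closedBall, dist_zero_right]
      calc ‖orthogonalProjection F z‖ ≤ 1 * ‖z‖ :=
            (orthogonalProjection F).le_of_opNorm_le (orthogonalProjection_norm_le F) z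
        _ ≤ 1 := by simpa using hz.le
    refine ⟨a.comp P, hcomp, ?_⟩
    have hbound : ∀ w ∈ Fᗮ, ‖a w‖ ≤ (ε/2) * ‖w‖ := by
      intro w hw
      rcases eq_or_ne w 0 with rfl | hw0
      · simp
      · have hnw : ‖w‖ ≠ 0 := norm_ne_zero_iff.2 hw0
        have h1 : ((‖w‖:ℂ)⁻¹ • w) ∈ Fᗮ := Submodule.smul_mem _ _ hw
        have h2 : ‖(‖w‖:ℂ)⁻¹ • w‖ = 1 := by
          simp [norm_smul, inv_mul_cancel₀ hnw]
        have := (hsmall _ h1 h2).le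
        rw [map_smul, norm_smul] at this
        simp only [norm_inv, Complex.norm_real, norm_norm] at this
        rw [inv_mul_le_iff₀ (by positivity)] at this
        linarith [this]
    have : ‖a - a.comp P‖ ≤ ε/2 := by
      refine ContinuousLinearMap.opNorm_le_bound _ (by linarith) fun z => ?_
      have hz : (a - a.comp P) z = a (z - P z) := by
        simp [map_sub]
      rw [hz]
      have hmem' : z - P z ∈ Fᗮ := Submodule.sub_starProjection_mem_orthogonal (K := F) z
      calc ‖a (z - P z)‖ ≤ (ε/2) * ‖z - P z‖ := hbound _ hmem'
        _ ≤ (ε/2) * ‖z‖ := by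
            gcongr
            -- ‖z - P z‖ ≤ ‖z‖
            have hpyth : ‖P z + (z - P z)‖ * ‖P z + (z - P z)‖
                = ‖P z‖ * ‖P z‖ + ‖z - P z‖ * ‖z - P z‖ :=
              norm_add_sq_eq_norm_sq_add_norm_sq_of_inner_eq_zero _ _
                (hmem' _ (SetLike.coe_mem (orthogonalProjection F z)))
            have hz2 : P z + (z - P z) = z := by abel
            rw [hz2] at hpyth
            nlinarith [norm_nonneg (P z), norm_nonneg z, norm_nonneg (z - P z)]
    rw [dist_eq_norm]
    calc ‖a - a.comp P‖ ≤ ε/2 := this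
      _ < ε := by linarith
  exact isClosed_setOf_isCompactOperator.closure_subset hmem

def seqSet {α : Type*} (f : Set α → α) (g : α → α) : ℕ → Set α
  | 0 => ∅
  | n+1 => seqSet f g n ∪ {f (seqSet f g n), g (f (seqSet f g n))}

lemma seqSet_finite {α : Type*} (f : Set α → α) (g : α → α) :
    ∀ n, (seqSet f g n).Finite
  | 0 => Set.finite_empty
  | n+1 => (seqSet_finite f g n).union (Set.toFinite _)

lemma seqSet_mono {α : Type*} (f : Set α → α) (g : α → α) {m n : ℕ} (h : m ≤ n) :
    seqSet f g m ⊆ seqSet f g n := by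
  induction n with
  | zero => simp_all
  | succ n ih =>
    rcases Nat.lt_or_ge m (n+1) with h' | h'
    · exact (ih (Nat.lt_succ_iff.mp h')).trans (by intro x hx; exact Or.inl hx)
    · have : m = n + 1 := le_antisymm h h'
      subst this; exact subset_rfl

lemma mem_seqSet {α : Type*} (f : Set α → α) (g : α → α) {j n : ℕ} (h : j < n) :
    f (seqSet f g j) ∈ seqSet f g n ∧ g (f (seqSet f g j)) ∈ seqSet f g n := by
  have h1 : f (seqSet f g j) ∈ seqSet f g (j+1) := Or.inr (Or.inl rfl)
  have h2 : g (f (seqSet f g j)) ∈ seqSet f g (j+1) := Or.inr (Or.inr rfl)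
  exact ⟨seqSet_mono f g h h1, seqSet_mono f g h h2⟩

lemma exists_orthonormal_seq (a : H →L[ℂ] H) (ε : ℝ)
    (hA : ∀ F : Submodule ℂ H, FiniteDimensional ℂ F →
      ∃ v : H, v ∈ Fᗮ ∧ ‖v‖ = 1 ∧ ε ≤ ‖a v‖) :
    ∃ e : ℕ → H, Orthonormal ℂ e ∧ (∀ n, ε ≤ ‖a (e n)‖) ∧
      ∀ m n, m ≠ n → ⟪a (e m), a (e n)⟫ = 0 := by
  classical
  set pick : Set H → H := fun S =>
    if hS : S.Finite then
      (hA (span ℂ S) (FiniteDimensional.span_of_finite ℂ hS)).choose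
    else 0 with hpick
  have hpick_spec : ∀ S : Set H, S.Finite →
      pick S ∈ (span ℂ S)ᗮ ∧ ‖pick S‖ = 1 ∧ ε ≤ ‖a (pick S)‖ := by
    intro S hS
    simp only [hpick, dif_pos hS]
    exact (hA (span ℂ S) (FiniteDimensional.span_of_finite ℂ hS)).choose_spec
  set g : H → H := fun h => (ContinuousLinearMap.adjoint a) (a h) with hg
  set e : ℕ → H := fun n => pick (seqSet pick g n) with he
  have hspec : ∀ n, e n ∈ (span ℂ (seqSet pick g n))ᗮ ∧ ‖e n‖ = 1 ∧ ε ≤ ‖a (e n)‖ :=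
    fun n => hpick_spec _ (seqSet_finite pick g n)
  have horth : ∀ j n, j < n → ⟪e j, e n⟫ = 0 ∧ ⟪a (e j), a (e n)⟫ = 0 := by
    intro j n hjn
    obtain ⟨h1, h2⟩ := mem_seqSet pick g hjn
    have hperp := (hspec n).1
    constructor
    · exact hperp _ (Submodule.subset_span h1)
    · have : ⟪g (e j), e n⟫ = 0 := hperp _ (Submodule.subset_span h2)
      rwa [hg, ContinuousLinearMap.adjoint_inner_left] at this
  refine ⟨e, ⟨fun n => (hspec n).2.1, ?_⟩, fun n => (hspec n).2.2, ?_⟩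
  · intro i j hij
    rcases lt_or_gt_of_ne hij with h | h
    · exact (horth i j h).1
    · rw [inner_eq_zero_symm]; exact (horth j i h).1
  · intro m n hmn
    rcases lt_or_gt_of_ne hmn with h | h
    · exact (horth m n h).2
    · rw [inner_eq_zero_symm]; exact (horth n m h).2

lemma norm_sq_sum_smul {ι : Type*} {v : ι → H} (hv : Orthonormal ℂ v) (l : ι → ℂ)
    (s : Finset ι) : ‖∑ i ∈ s, l i • v i‖ ^ 2 = ∑ i ∈ s, ‖l i‖ ^ 2 := by
  have h1 : ⟪∑ i ∈ s, l i • v i, ∑ i ∈ s, l i • v i⟫ = ∑ i ∈ s, (starRingEnd ℂ) (l i) * l i :=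
    hv.inner_sum l l s
  have h2 : ‖∑ i ∈ s, l i • v i‖ ^ 2 = Complex.re ⟪∑ i ∈ s, l i • v i, ∑ i ∈ s, l i • v i⟫ := by
    rw [← @inner_self_eq_norm_sq ℂ]; rfl
  rw [h2, h1, Complex.re_sum]
  refine Finset.sum_congr rfl fun i _ => ?_
  rw [RCLike.conj_mul]
  norm_cast

lemma bounded_below_on_closure (a : H →L[ℂ] H) {ε : ℝ} (hε : 0 < ε) (e : ℕ → H)
    (he : Orthonormal ℂ e) (hnorm : ∀ n, ε ≤ ‖a (e n)‖)
    (horth : ∀ m n, m ≠ n → ⟪a (e m), a (e n)⟫ = 0) :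
    ∀ y ∈ (span ℂ (Set.range e)).topologicalClosure, ε * ‖y‖ ≤ ‖a y‖ := by
  have hC : IsClosed {y : H | ε * ‖y‖ ≤ ‖a y‖} :=
    isClosed_le (by fun_prop) (by fun_prop)
  have hne : ∀ n, a (e n) ≠ 0 := fun n =>
    norm_ne_zero_iff.mp (by linarith [hnorm n])
  set u : ℕ → H := fun n => ((‖a (e n)‖ : ℂ))⁻¹ • a (e n) with hu
  have hu_orth : Orthonormal ℂ u := by
    constructor
    · intro n
      rw [hu]
      simp only [norm_smul, norm_inv, Complex.norm_real, norm_norm]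
      rw [inv_mul_cancel₀ (norm_ne_zero_iff.mpr (hne n))]
    · intro m n hmn
      simp only [hu, inner_smul_left, inner_smul_right, horth m n hmn, mul_zero]
  have hspan : ∀ y ∈ span ℂ (Set.range e), ε * ‖y‖ ≤ ‖a y‖ := by
    intro y hy
    rw [Finsupp.mem_span_range_iff_exists_finsupp] at hy
    obtain ⟨c, rfl⟩ := hy
    rw [Finsupp.sum]
    have hay : a (∑ i ∈ c.support, c i • e i)
        = ∑ i ∈ c.support, (c i * (‖a (e i)‖ : ℂ)) • u i := by
      rw [map_sum]
      refine Finset.sum_congr rfl fun i _ => ?_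
      rw [map_smul, hu, mul_smul, smul_inv_smul₀]
      exact_mod_cast Complex.ofReal_ne_zero.mpr (norm_ne_zero_iff.mpr (hne i))
    have h1 : ‖∑ i ∈ c.support, c i • e i‖ ^ 2 = ∑ i ∈ c.support, ‖c i‖ ^ 2 :=
      norm_sq_sum_smul he _ _
    have h2 : ‖a (∑ i ∈ c.support, c i • e i)‖ ^ 2
        = ∑ i ∈ c.support, ‖c i * (‖a (e i)‖ : ℂ)‖ ^ 2 := by
      rw [hay]; exact norm_sq_sum_smul hu_orth _ _
    have h3 : (ε * ‖∑ i ∈ c.support, c i • e i‖) ^ 2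
        ≤ ‖a (∑ i ∈ c.support, c i • e i)‖ ^ 2 := by
      rw [mul_pow, h1, h2, Finset.mul_sum]
      refine Finset.sum_le_sum fun i _ => ?_
      rw [norm_mul, mul_pow]
      have : ε ^ 2 ≤ ‖(‖a (e i)‖ : ℂ)‖ ^ 2 := by
        rw [Complex.norm_real, norm_norm]
        exact pow_le_pow_left₀ hε.le (hnorm i) 2
      nlinarith [norm_nonneg (c i), sq_nonneg (‖c i‖)]
    have h4 : 0 ≤ ε * ‖∑ i ∈ c.support, c i • e i‖ := by positivity
    exact (pow_le_pow_iff_left₀ h4 (norm_nonneg _) two_ne_zero).mp h3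
  intro y hy
  have hsub : ((span ℂ (Set.range e)).topologicalClosure : Set H)
      ⊆ {y : H | ε * ‖y‖ ≤ ‖a y‖} := by
    rw [Submodule.topologicalClosure_coe]
    exact closure_minimal hspan hC
  exact hsub hy

lemma key_factorization (a x : H →L[ℂ] H) (hx : IsCompactOperator (⇑x : H → H))
    (hanc : ¬ IsCompactOperator (⇑a : H → H)) :
    ∃ b c : H →L[ℂ] H, b * (a * (c * x)) = x := by
  classical
  obtain ⟨ε, hε, hA⟩ := exists_eps a hanc
  obtain ⟨e, he, hnorm, horth⟩ := exists_orthonormal_seq a ε hA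
  set M : Submodule ℂ H := (span ℂ (Set.range e)).topologicalClosure with hMdef
  have hM : ∀ y ∈ M, ε * ‖y‖ ≤ ‖a y‖ := bounded_below_on_closure a hε e he hnorm horth
  have heM : ∀ k, e k ∈ M :=
    fun k => (span ℂ (Set.range e)).le_topologicalClosure
      (Submodule.subset_span (Set.mem_range_self k))
  set N : Submodule ℂ H := (LinearMap.range (x : H →ₗ[ℂ] H)).topologicalClosure with hNdef
  have hNclosed : IsClosed (N : Set H) := Submodule.isClosed_topologicalClosure _
  haveI : CompleteSpace N := hNclosed.completeSpace_coe
  -- separability of N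
  have hsepN : TopologicalSpace.IsSeparable (N : Set H) := by
    have hsub : Set.range (⇑x : H → H) ⊆ ⋃ n : ℕ, closure ((⇑x) '' Metric.ball 0 (n+1)) := by
      rintro - ⟨z, rfl⟩
      obtain ⟨n, hn⟩ := exists_nat_gt ‖z‖
      exact Set.mem_iUnion.mpr ⟨n, subset_closure ⟨z, by
        simpa [Metric.mem_ball, dist_zero_right] using hn.trans_le (by push_cast; linarith), rfl⟩⟩
    have hsep1 : TopologicalSpace.IsSeparable
        (⋃ n : ℕ, closure ((⇑x) '' Metric.ball 0 (n+1))) :=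
      TopologicalSpace.isSeparable_iUnion.mpr fun n =>
        (hx.isCompact_closure_image_ball (n+1)).isSeparable
    have : TopologicalSpace.IsSeparable (Set.range (⇑x : H → H)) := hsep1.mono hsub
    have hN : (N : Set H) = closure (Set.range (⇑x : H → H)) := by
      rw [hNdef, Submodule.topologicalClosure_coe]
      rfl
    rw [hN]
    exact this.closure
  haveI hsepsp : TopologicalSpace.SeparableSpace N := hsepN.separableSpace
  -- Hilbert basis of N
  obtain ⟨w, bas, hbas⟩ := exists_hilbertBasis ℂ N
  -- countability of w
  haveI hcw : Countable w := by
    have horthw : Orthonormal ℂ ((↑) : w → N) := hbas ▸ bas.orthonormal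
    refine Pairwise.countable_of_isOpen_disjoint
      (s := fun p : w => Metric.ball (p : N) 2⁻¹) ?_ (fun p => Metric.isOpen_ball)
      (fun p => Metric.nonempty_ball.mpr (by norm_num))
    intro p q hpq
    apply Metric.ball_disjoint_ball
    have hinner : ⟪(p : N), (q : N)⟫ = 0 := horthw.2 hpq
    have hsq : ‖(p : N) - (q : N)‖ ^ 2 = 2 := by
      rw [@norm_sub_sq ℂ, hinner]
      simp [horthw.1 p, horthw.1 q]
      norm_num
    have h1 : (1:ℝ) ≤ ‖(p : N) - (q : N)‖ := by
      nlinarith [norm_nonneg ((p : N) - (q : N))]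
    rw [dist_eq_norm]
    linarith
  obtain ⟨inj, hinj⟩ := Countable.exists_injective_nat w
  -- the isometry from N into M
  have hu : Orthonormal ℂ (fun i : w => e (inj i)) := he.comp inj hinj
  set L : lp (fun _ : w => ℂ) 2 →ₗᵢ[ℂ] H := hu.orthogonalFamily.linearIsometry with hL
  set V₀ : N →ₗᵢ[ℂ] H := L.comp bas.repr.toLinearIsometry with hV₀
  have hV₀M : ∀ n : N, V₀ n ∈ M := by
    intro n
    have hsum : HasSum (fun i : w => bas.repr n i • e (inj i)) (L (bas.repr n)) := by
      have := hu.orthogonalFamily.hasSum_linearIsometry (bas.repr n)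
      simpa [LinearIsometry.toSpanSingleton_apply] using this
    have hMclosed : IsClosed (M : Set H) := Submodule.isClosed_topologicalClosure _
    refine hMclosed.mem_of_tendsto hsum (Filter.Eventually.of_forall fun t => ?_)
    exact Submodule.sum_mem M fun i _ => Submodule.smul_mem M _ (heM (inj i))
  -- operators
  set V : H →L[ℂ] H := V₀.toContinuousLinearMap.comp (orthogonalProjection N) with hV
  set S : N →L[ℂ] H := a.comp V₀.toContinuousLinearMap with hS
  have hSlow : ∀ n : N, ε * ‖n‖ ≤ ‖S n‖ := by
    intro n
    have h1 : ε * ‖V₀ n‖ ≤ ‖a (V₀ n)‖ := hM _ (hV₀M n)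
    rwa [V₀.norm_map] at h1
  have hanti : AntilipschitzWith (ε⁻¹).toNNReal S := by
    refine S.antilipschitz_of_bound fun n => ?_
    rw [Real.coe_toNNReal _ (by positivity)]
    rw [inv_mul_eq_div, le_div_iff₀ hε, mul_comm]
    exact hSlow n
  set W : Submodule ℂ H := LinearMap.range (S : N →ₗ[ℂ] H) with hW
  haveI : CompleteSpace W := hanti.completeSpace_range_clm
  set S' : N →L[ℂ] W := S.codRestrict W (fun n => LinearMap.mem_range_self (S : N →ₗ[ℂ] H) n) with hS'
  have hker : LinearMap.ker (S' : N →ₗ[ℂ] W) = ⊥ := by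
    rw [LinearMap.ker_eq_bot']
    intro n hn
    have hval : (S' n : H) = 0 := by rw [show S' n = 0 from hn]; rfl
    have hSn : S n = 0 := by
      rw [← S.coe_codRestrict_apply W (fun m => LinearMap.mem_range_self (S : N →ₗ[ℂ] H) m) n]
      exact hval
    have h0 : S n = S 0 := by simpa using hSn
    exact hanti.injective h0
  have hrange : LinearMap.range (S' : N →ₗ[ℂ] W) = ⊤ := by
    rw [LinearMap.range_eq_top]
    rintro ⟨-, n, rfl⟩
    exact ⟨n, rfl⟩
  set equiv := ContinuousLinearEquiv.ofBijective S' hker hrange with hequiv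
  set bop : H →L[ℂ] H :=
    N.subtypeL.comp ((equiv.symm : W →L[ℂ] N).comp (orthogonalProjection W)) with hbop
  refine ⟨bop, V, ?_⟩
  ext z
  have hxz : x z ∈ N := (LinearMap.range (x : H →ₗ[ℂ] H)).le_topologicalClosure (LinearMap.mem_range_self (x : H →ₗ[ℂ] H) z)
  set n : N := ⟨x z, hxz⟩ with hn
  have h1 : V (x z) = V₀ n := by
    rw [hV]
    simp only [ContinuousLinearMap.coe_comp', Function.comp_apply]
    rw [show orthogonalProjection N (x z) = n from orthogonalProjection_mem_subspace_eq_self n]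
    rfl
  have h2 : a (V₀ n) = S n := rfl
  have h3 : orthogonalProjection W (S n) = S' n := by
    have : (S' n : H) = S n := rfl
    rw [← this]
    exact orthogonalProjection_mem_subspace_eq_self (S' n)
  have h4 : equiv.symm (S' n) = n := by
    have : equiv n = S' n := rfl
    rw [← this, ContinuousLinearEquiv.symm_apply_apply]
  show bop (a (V (x z))) = x z
  rw [h1, h2, hbop]
  simp only [ContinuousLinearMap.coe_comp', Function.comp_apply]
  rw [h3]
  have : (equiv.symm : W →L[ℂ] N) (S' n) = n := h4
  rw [this]
  rfl


end Aux

/-- If `I, J` are proper two-sided ideals of compact operators on an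
infinite-dimensional Hilbert space and `I ⊄ J`, then `J:I` consists of compact
operators. -/
theorem statement8 (hdim : ¬ FiniteDimensional ℂ H)
    (I J : Set (H →L[ℂ] H)) (hI : IsOpIdeal I) (hJ : IsOpIdeal J)
    (hIK : ∀ x ∈ I, IsCompactOperator (⇑x : H → H))
    (hJK : ∀ x ∈ J, IsCompactOperator (⇑x : H → H))
    (hIne : I ≠ ∅) (hJne : J ≠ ∅)
    (hnsub : ¬ I ⊆ J) :
    ∀ a ∈ dualIdeal J I, IsCompactOperator (⇑a : H → H) := by
  intro a ha
  by_contra hanc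
  obtain ⟨x0, hx0I, hx0J⟩ := Set.not_subset.mp hnsub
  obtain ⟨b, c, hbc⟩ := key_factorization a x0 (hIK x0 hx0I) hanc
  have h1 : c * x0 ∈ I := hI.mul_mem_left c hx0I
  have h2 : a * (c * x0) ∈ J := ha _ h1
  have h3 : b * (a * (c * x0)) ∈ J := hJ.mul_mem_left b h2
  rw [hbc] at h3
  exact hx0J h3
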